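/- Let K be a field of characteristic zero and let A, B be symmetric n×n matrices over K such that the pencil (A, B) is nondegenerate in the sense that the binary form F(x,y) = det(Ax − By) is nonzero with n distinct roots in P¹(K̄). If F splits completely over K, i.e. F(x,y) = ∏ⱼ(sⱼx − tⱼy) with sⱼ, tⱼ ∈ K, then there exists an invertible matrix U over K with UᵀAU and UᵀBU both diagonal; i.e., A and B are simultaneously diagonalizable by congruence over K. -/

import Mathlib

open Matrix

private theorem aux_li {K : Type} [Field K] {n : ℕ} (C P : Matrix (Fin n) (Fin n) K)
    (hC : IsUnit C.det) (v : Fin n → Fin n → K) (μ : Fin n → K)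
    (hv0 : ∀ j, v j ≠ 0) (hev : ∀ j, P *ᵥ v j = μ j • (C *ᵥ v j))
    (hμ : Function.Injective μ) : LinearIndependent K v := by
  have hCC : C⁻¹ * C = 1 := Matrix.nonsing_inv_mul C hC
  set f : (Fin n → K) →ₗ[K] (Fin n → K) := Matrix.mulVecLin (C⁻¹ * P) with hf
  have hfv : ∀ j, f (v j) = μ j • v j := by
    intro j
    show (C⁻¹ * P) *ᵥ v j = μ j • v j
    rw [← Matrix.mulVec_mulVec, hev, Matrix.mulVec_smul, Matrix.mulVec_mulVec, hCC,
      Matrix.one_mulVec]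
  exact Module.End.eigenvectors_linearIndependent' f μ hμ v
    (fun j => ⟨Module.End.mem_eigenspace_iff.mpr (hfv j), hv0 j⟩)

theorem stmt11 {K : Type} [Field K] [CharZero K] {n : ℕ}
    (A B : Matrix (Fin n) (Fin n) K) (hA : A.IsSymm) (hB : B.IsSymm)
    (s t : Fin n → K)
    (hfact : ∀ x y : K, (x • A - y • B).det = ∏ j : Fin n, (s j * x - t j * y))
    (hne : ∃ x y : K, (x • A - y • B).det ≠ 0)
    (hdist : ∀ i j : Fin n, i ≠ j → s i * t j - s j * t i ≠ 0) :
    ∃ U : Matrix (Fin n) (Fin n) K, IsUnit U.det ∧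
      (Uᵀ * A * U).IsDiag ∧ (Uᵀ * B * U).IsDiag := by
  rcases Nat.eq_zero_or_pos n with hn | hn
  · have he : IsEmpty (Fin n) := by subst hn; infer_instance
    exact ⟨1, by simp, fun i j _ => he.elim i, fun i j _ => he.elim i⟩
  haveI : Nonempty (Fin n) := Fin.pos_iff_nonempty.mp hn
  obtain ⟨x0, y0, hC⟩ := hne
  set C : Matrix (Fin n) (Fin n) K := x0 • A - y0 • B with hCdef
  set c : Fin n → K := fun j => s j * x0 - t j * y0 with hc
  have hcprod : C.det = ∏ j : Fin n, c j := hfact x0 y0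
  have hcj : ∀ j, c j ≠ 0 := by
    intro j
    refine Finset.prod_ne_zero_iff.mp ?_ j (Finset.mem_univ j)
    rw [← hcprod]; exact hC
  -- kernel vectors
  have hker : ∀ j : Fin n, ∃ v : Fin n → K, v ≠ 0 ∧ (t j • A - s j • B) *ᵥ v = 0 := by
    intro j
    have hdet : (t j • A - s j • B).det = 0 := by
      rw [hfact]
      exact Finset.prod_eq_zero (Finset.mem_univ j) (by ring)
    obtain ⟨v, hv, hv2⟩ := (Matrix.exists_mulVec_eq_zero_iff).mpr hdet
    exact ⟨v, hv, hv2⟩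
  choose v hv0 hvk using hker
  have key1 : ∀ j, t j • (A *ᵥ v j) = s j • (B *ᵥ v j) := by
    intro j
    have h := hvk j
    rwa [Matrix.sub_mulVec, Matrix.smul_mulVec, Matrix.smul_mulVec,
      sub_eq_zero] at h
  have key1' : ∀ j k, t j * (A *ᵥ v j) k = s j * (B *ᵥ v j) k := by
    intro j k; exact congrFun (key1 j) k
  -- symmetric dot product
  have hsymm : ∀ (M : Matrix (Fin n) (Fin n) K), Mᵀ = M →
      ∀ u w : Fin n → K, (M *ᵥ u) ⬝ᵥ w = u ⬝ᵥ (M *ᵥ w) := by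
    intro M hM u w
    rw [dotProduct_mulVec, ← Matrix.mulVec_transpose, hM]
  -- off-diagonal orthogonality
  have hoff : ∀ i j, i ≠ j → v i ⬝ᵥ (A *ᵥ v j) = 0 ∧ v i ⬝ᵥ (B *ᵥ v j) = 0 := by
    intro i j hij
    set a := v i ⬝ᵥ (A *ᵥ v j) with ha
    set b := v i ⬝ᵥ (B *ᵥ v j) with hb
    have h1 : t j * a = s j * b := by
      have h := congrArg (fun w => v i ⬝ᵥ w) (key1 j)
      simpa [dotProduct_smul, smul_eq_mul] using h
    have h2 : t i * a = s i * b := by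
      have h := congrArg (fun w => w ⬝ᵥ v j) (key1 i)
      simp only [smul_dotProduct, smul_eq_mul] at h
      rwa [hsymm A hA.eq, hsymm B hB.eq, ← ha, ← hb] at h
    have hd := hdist i j hij
    constructor
    · have : (s i * t j - s j * t i) * a = 0 := by linear_combination s i * h1 - s j * h2
      exact (mul_eq_zero.mp this).resolve_left hd
    · have : (s i * t j - s j * t i) * b = 0 := by linear_combination t i * h1 - t j * h2
      exact (mul_eq_zero.mp this).resolve_left hd
  -- relations with C
  have key2A : ∀ j, c j • (A *ᵥ v j) = s j • (C *ᵥ v j) := by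
    intro j; funext k
    have hk := key1' j k
    have hCk : (C *ᵥ v j) k = x0 * (A *ᵥ v j) k - y0 * (B *ᵥ v j) k := by
      rw [hCdef, Matrix.sub_mulVec, Matrix.smul_mulVec, Matrix.smul_mulVec]
      simp
    simp only [Pi.smul_apply, smul_eq_mul, hCk, hc]
    linear_combination (-y0) * hk
  have key2B : ∀ j, c j • (B *ᵥ v j) = t j • (C *ᵥ v j) := by
    intro j; funext k
    have hk := key1' j k
    have hCk : (C *ᵥ v j) k = x0 * (A *ᵥ v j) k - y0 * (B *ᵥ v j) k := by
      rw [hCdef, Matrix.sub_mulVec, Matrix.smul_mulVec, Matrix.smul_mulVec]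
      simp
    simp only [Pi.smul_apply, smul_eq_mul, hCk, hc]
    linear_combination (-x0) * hk
  have hCunit : IsUnit C.det := by exact isUnit_iff_ne_zero.mpr hC
  -- linear independence
  have hli : LinearIndependent K v := by
    by_cases hx0 : x0 ≠ 0
    · refine aux_li C B hCunit v (fun j => t j / c j) hv0 ?_ ?_
      · intro j
        have h := key2B j
        funext k
        have := congrFun h k
        simp only [Pi.smul_apply, smul_eq_mul] at this ⊢
        rw [div_mul_eq_mul_div, eq_div_iff (hcj j)]
        linear_combination this
      · intro i j hij
        by_contra hne'
        have hd := hdist i j hne'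
        rw [div_eq_div_iff (hcj i) (hcj j)] at hij
        apply hd
        have hx : x0 * (s i * t j - s j * t i) = 0 := by
          simp only [hc] at hij; linear_combination -hij
        exact (mul_eq_zero.mp hx).resolve_left hx0
    · push_neg at hx0
      have hy0 : y0 ≠ 0 := by
        intro hy
        apply hC
        rw [hCdef, hx0, hy, zero_smul, zero_smul, sub_zero, Matrix.det_zero]
      refine aux_li C A hCunit v (fun j => s j / c j) hv0 ?_ ?_
      · intro j
        have h := key2A j
        funext k
        have := congrFun h k
        simp only [Pi.smul_apply, smul_eq_mul] at this ⊢
        rw [div_mul_eq_mul_div, eq_div_iff (hcj j)]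
        linear_combination this
      · intro i j hij
        by_contra hne'
        have hd := hdist i j hne'
        rw [div_eq_div_iff (hcj i) (hcj j)] at hij
        apply hd
        have hy : y0 * (s i * t j - s j * t i) = 0 := by
          simp only [hc] at hij; linear_combination -hij
        exact (mul_eq_zero.mp hy).resolve_left hy0
  -- build U
  refine ⟨Matrix.of (fun i j => v j i), ?_, ?_, ?_⟩
  case _ =>
    rw [isUnit_iff_ne_zero]
    intro h
    obtain ⟨g, hg0, hg⟩ := Matrix.exists_mulVec_eq_zero_iff.mpr h
    have hsum : ∑ j, g j • v j = 0 := by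
      funext i
      have := congrFun hg i
      simp only [Matrix.mulVec, dotProduct, Matrix.of_apply, Pi.zero_apply] at this
      simpa [Finset.sum_apply, mul_comm] using this
    exact hg0 (funext (Fintype.linearIndependent_iff.mp hli g hsum))
  all_goals {
    intro i j hij
    have hentry : ∀ (M : Matrix (Fin n) (Fin n) K),
        ((Matrix.of (fun i j => v j i))ᵀ * M * (Matrix.of (fun i j => v j i))) i j
          = v i ⬝ᵥ (M *ᵥ v j) := by
      intro M
      simp only [Matrix.mul_apply, Matrix.transpose_apply, Matrix.mulVec, dotProduct,
        Matrix.of_apply, Finset.sum_mul, Finset.mul_sum]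
      rw [Finset.sum_comm]
      exact Finset.sum_congr rfl fun l _ => Finset.sum_congr rfl fun k _ => by ring
    first
    | exact (hentry A).trans (hoff i j hij).1
    | exact (hentry B).trans (hoff i j hij).2
  }
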